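/- Let P = (P*: 𝒜′ → 𝒜 ⊣ P_*: 𝒜 → 𝒜′) and Q = (Q*: ℬ′ → ℬ ⊣ Q_*: ℬ → ℬ′) be adjunctions with units η_P, η_Q and counits ε_P, ε_Q, and let F: 𝒜 → ℬ, G: ℬ → 𝒜, F′: 𝒜′ → ℬ′, G′: ℬ′ → 𝒜′ be functors. Let 𝒞 ⊆ 𝒜, 𝒟 ⊆ ℬ, 𝒞′ ⊆ 𝒜′, 𝒟′ ⊆ ℬ′ be full subcategories such that F maps 𝒜 into 𝒟, G maps 𝒟 into 𝒞, P* maps 𝒞′ into 𝒞, Q* maps 𝒟′ into 𝒟, F′ maps 𝒞′ into 𝒟′, and G′ maps 𝒟′ into 𝒞′. Suppose given natural isomorphisms Ω_F*: F∘P* ≅ Q*∘F′, Ω_{F*}: F′∘P_* ≅ Q_*∘F, Ω_G*: G∘Q* ≅ P*∘G′, Ω_{G*}: G′∘Q_* ≅ P_*∘G satisfying: ε_Q F ∘ Q*Ω_{F*} ∘ Ω_F*P_* = Fε_P; Q_*Ω_F* ∘ Ω_{F*}P* ∘ F′η_P = η_Q F′; ε_P G ∘ P*Ω_{G*} ∘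 Ω_G*Q_* = Gε_Q; and P_*Ω_G* ∘ Ω_{G*}Q* ∘ G′η_Q = η_P G′. Set Ω_F := Q*Ω_{F*} ∘ Ω_F*P_* and Ω_G := P*Ω_{G*} ∘ Ω_G*Q_*. Assume that every component of η_P and of η_Q is a split monomorphism, and that there is a bijection Σ(D, A): Hom_ℬ(D, F(A)) ≅ Hom_𝒜(G(D), A) natural in D ∈ 𝒟 and A ∈ 𝒜; let ω: G∘F|_𝒞 → id_𝒞 denote the resulting adjunction counit of (G|_𝒟 ⊣ F|_𝒞). Then: (1) if F|_𝒞: 𝒞 → 𝒟 is fully faithful, so is F′|_{𝒞′}: 𝒞′ → 𝒟′; (2) if moreover F|_𝒞 and G′|_{𝒟′} are fully faithful and the diagram (⋆) commutes, namely P*P_*ωP* ∘ Ω_G F P* ∘ GΩ_F P* ∘ GFP*η_P = P*η_P ∘ ωP* as natural transformations G∘F∘P*|_{𝒞′} → P*∘P_*∘P*|_{𝒞′}, then F′|_{𝒞′}: 𝒞′ → 𝒟′ is an equivalence. -/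

import Mathlib

open CategoryTheory


lemma split_faithful {A' A : Type*} [Category A'] [Category A]
    (Pstar : A' ⥤ A) (Plow : A ⥤ A') (adjP : Pstar ⊣ Plow)
    (hsplit : ∀ X : A', ∃ ζ : Plow.obj (Pstar.obj X) ⟶ X, adjP.unit.app X ≫ ζ = 𝟙 X)
    {X Y : A'} {f g : X ⟶ Y} (h : Pstar.map f = Pstar.map g) : f = g := by
  obtain ⟨ζ, hζ⟩ := hsplit Y
  have hf := adjP.unit.naturality f
  have hg := adjP.unit.naturality g
  simp only [Functor.id_map, Functor.comp_map] at hf hg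
  calc f = (f ≫ adjP.unit.app Y) ≫ ζ := by rw [Category.assoc, hζ, Category.comp_id]
    _ = (g ≫ adjP.unit.app Y) ≫ ζ := by rw [hf, hg, h]
    _ = g := by rw [Category.assoc, hζ, Category.comp_id]

lemma split_conservative {A' A : Type*} [Category A'] [Category A]
    (Pstar : A' ⥤ A) (Plow : A ⥤ A') (adjP : Pstar ⊣ Plow)
    (hsplit : ∀ X : A', ∃ ζ : Plow.obj (Pstar.obj X) ⟶ X, adjP.unit.app X ≫ ζ = 𝟙 X)
    {X Y : A'} (f : X ⟶ Y) (h : IsIso (Pstar.map f)) : IsIso f := by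
  have half : ∀ {X Y : A'} (f : X ⟶ Y), IsIso (Pstar.map f) →
      ∃ v : Y ⟶ X, f ≫ v = 𝟙 X := by
    intro X Y f hf
    obtain ⟨ζ, hζ⟩ := hsplit X
    refine ⟨adjP.unit.app Y ≫ inv (Plow.map (Pstar.map f)) ≫ ζ, ?_⟩
    have hnat := adjP.unit.naturality f
    simp only [Functor.id_map, Functor.comp_map] at hnat
    rw [← Category.assoc, hnat, Category.assoc, IsIso.hom_inv_id_assoc, hζ]
  obtain ⟨v, hv⟩ := half f h
  have hPv : IsIso (Pstar.map v) := by
    have : Pstar.map f ≫ Pstar.map v = 𝟙 _ := by rw [← Pstar.map_comp, hv, Pstar.map_id]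
    exact ⟨Pstar.map f, by rw [← cancel_epi (Pstar.map f), ← Category.assoc, this]; simp, this⟩
  obtain ⟨w, hw⟩ := half v hPv
  have hwf : w = f := by
    calc w = (f ≫ v) ≫ w := by rw [hv, Category.id_comp]
      _ = f := by rw [Category.assoc, hw, Category.comp_id]
  exact ⟨v, hv, by rw [← hwf]; exact hw⟩

/-- Restriction of a functor to full subcategories. -/
def restrictFunctor {A B : Type*} [Category A] [Category B] (F : A ⥤ B)
    (P : A → Prop) (Q : B → Prop) (h : ∀ a, P a → Q (F.obj a)) :
    ObjectProperty.FullSubcategory P ⥤ ObjectProperty.FullSubcategory Q :=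
  ObjectProperty.lift Q (ObjectProperty.ι P ⋙ F) fun X => h X.obj X.property

/-- Lemma 2.12 ("main lemma"): given compatible adjunctions `(P* ⊣ P_*)`, `(Q* ⊣ Q_*)`,
functors `F, G, F′, G′` and full subcategories as in the statement, with split-mono units
and a partial adjunction `Σ(D, A) : Hom(D, F(A)) ≅ Hom(G(D), A)` natural in `D ∈ 𝒟`,
`A ∈ 𝒜` with counit `ω`:
(1) if `F|_𝒞` is fully faithful then so is `F′|_𝒞′`;
(2) if moreover `F|_𝒞` and `G′|_𝒟′` are fully faithful and the diagram `(⋆)` commutes,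
then `F′|_𝒞′` is an equivalence. -/
theorem main_lemma
    {A' A B' B : Type*} [Category A'] [Category A] [Category B'] [Category B]
    (Pstar : A' ⥤ A) (Plow : A ⥤ A') (adjP : Pstar ⊣ Plow)
    (Qstar : B' ⥤ B) (Qlow : B ⥤ B') (adjQ : Qstar ⊣ Qlow)
    (F : A ⥤ B) (G : B ⥤ A) (F' : A' ⥤ B') (G' : B' ⥤ A')
    (PC : A → Prop) (PD : B → Prop) (PC' : A' → Prop) (PD' : B' → Prop)
    (hFD : ∀ a : A, PD (F.obj a))
    (hGC : ∀ b : B, PD b → PC (G.obj b))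
    (hPC : ∀ x : A', PC' x → PC (Pstar.obj x))
    (hQD : ∀ y : B', PD' y → PD (Qstar.obj y))
    (hF' : ∀ x : A', PC' x → PD' (F'.obj x))
    (hG' : ∀ y : B', PD' y → PC' (G'.obj y))
    (ΩFs : Pstar ⋙ F ≅ F' ⋙ Qstar) (ΩFl : Plow ⋙ F' ≅ F ⋙ Qlow)
    (ΩGs : Qstar ⋙ G ≅ G' ⋙ Pstar) (ΩGl : Qlow ⋙ G' ≅ G ⋙ Plow)
    (hiF : ∀ X : A,
      ΩFs.hom.app (Plow.obj X) ≫ Qstar.map (ΩFl.hom.app X) ≫ adjQ.counit.app (F.obj X)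
        = F.map (adjP.counit.app X))
    (hiiF : ∀ X : A',
      F'.map (adjP.unit.app X) ≫ ΩFl.hom.app (Pstar.obj X) ≫ Qlow.map (ΩFs.hom.app X)
        = adjQ.unit.app (F'.obj X))
    (hiG : ∀ Y : B,
      ΩGs.hom.app (Qlow.obj Y) ≫ Pstar.map (ΩGl.hom.app Y) ≫ adjP.counit.app (G.obj Y)
        = G.map (adjQ.counit.app Y))
    (hiiG : ∀ Y : B',
      G'.map (adjQ.unit.app Y) ≫ ΩGl.hom.app (Qstar.obj Y) ≫ Plow.map (ΩGs.hom.app Y)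
        = adjP.unit.app (G'.obj Y))
    (hsplitP : ∀ X : A', ∃ ζ : Plow.obj (Pstar.obj X) ⟶ X, adjP.unit.app X ≫ ζ = 𝟙 X)
    (hsplitQ : ∀ Y : B', ∃ ζ : Qlow.obj (Qstar.obj Y) ⟶ Y, adjQ.unit.app Y ≫ ζ = 𝟙 Y)
    (e : ∀ (D : B), PD D → ∀ (X : A), (D ⟶ F.obj X) ≃ (G.obj D ⟶ X))
    (hnat : ∀ (D D' : B) (hD : PD D) (hD' : PD D') (g : D' ⟶ D)
      (X X' : A) (a : X ⟶ X') (φ : D ⟶ F.obj X),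
      e D' hD' X' (g ≫ φ ≫ F.map a) = G.map g ≫ e D hD X φ ≫ a)
    (ω : ∀ X : A, G.obj (F.obj X) ⟶ X)
    (hω : ∀ X : A, ω X = e (F.obj X) (hFD X) X (𝟙 (F.obj X))) :
    (((restrictFunctor F PC PD fun a ha => hFD a).Full ∧
        (restrictFunctor F PC PD fun a ha => hFD a).Faithful) →
      (restrictFunctor F' PC' PD' hF').Full ∧ (restrictFunctor F' PC' PD' hF').Faithful) ∧
    ((((restrictFunctor F PC PD fun a ha => hFD a).Full ∧
        (restrictFunctor F PC PD fun a ha => hFD a).Faithful) ∧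
      ((restrictFunctor G' PD' PC' hG').Full ∧ (restrictFunctor G' PD' PC' hG').Faithful) ∧
      (∀ X : A', PC' X →
        G.map (F.map (Pstar.map (adjP.unit.app X))) ≫
            G.map (ΩFs.hom.app (Plow.obj (Pstar.obj X)) ≫
              Qstar.map (ΩFl.hom.app (Pstar.obj X))) ≫
            (ΩGs.hom.app (Qlow.obj (F.obj (Pstar.obj X))) ≫
              Pstar.map (ΩGl.hom.app (F.obj (Pstar.obj X)))) ≫
            Pstar.map (Plow.map (ω (Pstar.obj X)))
          = ω (Pstar.obj X) ≫ Pstar.map (adjP.unit.app X))) →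
      (restrictFunctor F' PC' PD' hF').IsEquivalence) := by
  classical
  -- naturality helpers
  have n1 : ∀ {Z W : A'} (u : Z ⟶ W),
      F.map (Pstar.map u) ≫ ΩFs.hom.app W = ΩFs.hom.app Z ≫ Qstar.map (F'.map u) :=
    fun u => by simpa using ΩFs.hom.naturality u
  have n2 : ∀ {Z W : A} (u : Z ⟶ W),
      F'.map (Plow.map u) ≫ ΩFl.hom.app W = ΩFl.hom.app Z ≫ Qlow.map (F.map u) :=
    fun u => by simpa using ΩFl.hom.naturality u
  have n3 : ∀ {Z W : B'} (u : Z ⟶ W),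
      G.map (Qstar.map u) ≫ ΩGs.hom.app W = ΩGs.hom.app Z ≫ Pstar.map (G'.map u) :=
    fun u => by simpa using ΩGs.hom.naturality u
  have n4 : ∀ {Z W : B} (u : Z ⟶ W),
      G'.map (Qlow.map u) ≫ ΩGl.hom.app W = ΩGl.hom.app Z ≫ Plow.map (G.map u) :=
    fun u => by simpa using ΩGl.hom.naturality u
  have hiiF' : ∀ (Z : A'),
      F'.map (adjP.unit.app Z) ≫ ΩFl.hom.app (Pstar.obj Z)
        = adjQ.unit.app (F'.obj Z) ≫ Qlow.map (ΩFs.inv.app Z) := by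
    intro Z
    rw [← hiiF Z, Category.assoc, Category.assoc, ← Qlow.map_comp]
    simp
  have hiiG' : ∀ (Z : B'),
      G'.map (adjQ.unit.app Z) ≫ ΩGl.hom.app (Qstar.obj Z)
        = adjP.unit.app (G'.obj Z) ≫ Plow.map (ΩGs.inv.app Z) := by
    intro Z
    rw [← hiiG Z, Category.assoc, Category.assoc, ← Plow.map_comp]
    simp
  -- the F-level comodule compatibility
  have comod : ∀ (Xo Yo : A') (a : Pstar.obj Xo ⟶ Pstar.obj Yo) (ψ : F'.obj Xo ⟶ F'.obj Yo),
      F.map a = ΩFs.hom.app Xo ≫ Qstar.map ψ ≫ ΩFs.inv.app Yo →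
      F.map (Pstar.map (adjP.unit.app Xo)) ≫ F.map (Pstar.map (Plow.map a))
        = F.map a ≫ F.map (Pstar.map (adjP.unit.app Yo)) := by
    intro Xo Yo a ψ ha
    have ha' : F.map a ≫ ΩFs.hom.app Yo = ΩFs.hom.app Xo ≫ Qstar.map ψ := by
      rw [ha]; simp
    rw [← cancel_mono (ΩFs.hom.app (Plow.obj (Pstar.obj Yo))
      ≫ Qstar.map (ΩFl.hom.app (Pstar.obj Yo)) ≫ Qstar.map (Qlow.map (ΩFs.hom.app Yo)))]
    simp only [Category.assoc]
    have s2 : Qstar.map (F'.map (Plow.map a)) ≫ Qstar.map (ΩFl.hom.app (Pstar.obj Yo))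
        = Qstar.map (ΩFl.hom.app (Pstar.obj Xo)) ≫ Qstar.map (Qlow.map (F.map a)) := by
      rw [← Qstar.map_comp, n2 a, Qstar.map_comp]
    have s3 : Qstar.map (Qlow.map (F.map a)) ≫ Qstar.map (Qlow.map (ΩFs.hom.app Yo))
        = Qstar.map (Qlow.map (ΩFs.hom.app Xo)) ≫ Qstar.map (Qlow.map (Qstar.map ψ)) := by
      rw [← Qstar.map_comp, ← Qlow.map_comp, ha', Qlow.map_comp, Qstar.map_comp]
    have s4 : ∀ Z : A', Qstar.map (F'.map (adjP.unit.app Z))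
          ≫ Qstar.map (ΩFl.hom.app (Pstar.obj Z)) ≫ Qstar.map (Qlow.map (ΩFs.hom.app Z))
        = Qstar.map (adjQ.unit.app (F'.obj Z)) := by
      intro Z
      rw [← Qstar.map_comp, ← Qstar.map_comp, hiiF Z]
    have s5 : adjQ.unit.app (F'.obj Xo) ≫ Qlow.map (Qstar.map ψ)
        = ψ ≫ adjQ.unit.app (F'.obj Yo) := by
      simpa using (adjQ.unit.naturality ψ).symm
    conv_rhs => rw [reassoc_of% (n1 (adjP.unit.app Yo)), s4 Yo, reassoc_of% ha']
    conv_lhs => rw [reassoc_of% (n1 (Plow.map a)), reassoc_of% (n1 (adjP.unit.app Xo)),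
      reassoc_of% s2, s3, reassoc_of% (s4 Xo), ← Qstar.map_comp, s5, Qstar.map_comp]
  -- part 1
  have key : ((restrictFunctor F PC PD fun a ha => hFD a).Full ∧
        (restrictFunctor F PC PD fun a ha => hFD a).Faithful) →
      (restrictFunctor F' PC' PD' hF').Full ∧ (restrictFunctor F' PC' PD' hF').Faithful := by
    rintro ⟨hFull, hFaith⟩
    have Ffull : ∀ {a b : A}, PC a → PC b → ∀ φ : F.obj a ⟶ F.obj b,
        ∃ u : a ⟶ b, F.map u = φ := by
      intro a b ha hb φ
      obtain ⟨u, hu⟩ := hFull.map_surjective (X := ⟨a, ha⟩) (Y := ⟨b, hb⟩)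
        (ObjectProperty.homMk φ)
      exact ⟨u.hom, congrArg (fun f => f.hom) hu⟩
    have Ffaith : ∀ {a b : A}, PC a → PC b → ∀ (u v : a ⟶ b),
        F.map u = F.map v → u = v := by
      intro a b ha hb u v huv
      have key2 : (restrictFunctor F PC PD fun a ha => hFD a).map (X := ⟨a, ha⟩) (Y := ⟨b, hb⟩)
          (ObjectProperty.homMk u) =
          (restrictFunctor F PC PD fun a ha => hFD a).map (ObjectProperty.homMk v) :=
        InducedCategory.hom_ext huv
      exact congrArg (fun f => f.hom) (hFaith.map_injective key2)
    constructor
    · constructor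
      intro X Y ψ
      obtain ⟨a, haF⟩ := Ffull (hPC _ X.property) (hPC _ Y.property)
        (ΩFs.hom.app X.obj ≫ Qstar.map ψ.hom ≫ ΩFs.inv.app Y.obj)
      obtain ⟨ζ, hζ⟩ := hsplitP Y.obj
      have f : X.obj ⟶ Y.obj := adjP.unit.app X.obj ≫ Plow.map a ≫ ζ
      refine ⟨ObjectProperty.homMk (adjP.unit.app X.obj ≫ Plow.map a ≫ ζ : X.obj ⟶ Y.obj), ?_⟩
      have hcom := comod X.obj Y.obj a ψ.hom (by rw [haF]; rfl)
      have hPf : F.map (Pstar.map (adjP.unit.app X.obj ≫ Plow.map a ≫ ζ)) = F.map a := by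
        rw [Pstar.map_comp, Pstar.map_comp, F.map_comp, F.map_comp, reassoc_of% hcom,
          ← F.map_comp, ← Pstar.map_comp, hζ, Pstar.map_id, F.map_id, Category.comp_id]
      apply ObjectProperty.hom_ext
      show F'.map (adjP.unit.app X.obj ≫ Plow.map a ≫ ζ) = ψ.hom
      apply split_faithful Qstar Qlow adjQ hsplitQ
      have hn := n1 (adjP.unit.app X.obj ≫ Plow.map a ≫ ζ)
      have : Qstar.map (F'.map (adjP.unit.app X.obj ≫ Plow.map a ≫ ζ))
          = ΩFs.inv.app X.obj ≫ F.map (Pstar.map (adjP.unit.app X.obj ≫ Plow.map a ≫ ζ))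
            ≫ ΩFs.hom.app Y.obj := by
        rw [hn]
        simp
      rw [this, hPf, haF]
      simp
      erw [Category.assoc, Iso.inv_hom_id_app]
      exact Category.comp_id _
    · constructor
      intro X Y f g h
      apply ObjectProperty.hom_ext
      have h' : F'.map f.hom = F'.map g.hom := congrArg (fun k => k.hom) h
      apply split_faithful Pstar Plow adjP hsplitP
      apply Ffaith (hPC _ X.property) (hPC _ Y.property)
      have hf : F.map (Pstar.map f.hom)
          = ΩFs.hom.app X.obj ≫ Qstar.map (F'.map f.hom) ≫ ΩFs.inv.app Y.obj := by
        rw [← Category.assoc, ← n1 f.hom]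
        simp
      have hg : F.map (Pstar.map g.hom)
          = ΩFs.hom.app X.obj ≫ Qstar.map (F'.map g.hom) ≫ ΩFs.inv.app Y.obj := by
        rw [← Category.assoc, ← n1 g.hom]
        simp
      rw [hf, hg, h']
  refine ⟨key, ?_⟩
  rintro ⟨hFF, hGff, hstar⟩
  obtain ⟨hF'Full, hF'Faith⟩ := key hFF
  obtain ⟨hFull, hFaith⟩ := hFF
  obtain ⟨hG'Full, hG'Faith⟩ := hGff
  have Ffull : ∀ {a b : A}, PC a → PC b → ∀ φ : F.obj a ⟶ F.obj b,
      ∃ u : a ⟶ b, F.map u = φ := by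
    intro a b ha hb φ
    obtain ⟨u, hu⟩ := hFull.map_surjective (X := ⟨a, ha⟩) (Y := ⟨b, hb⟩)
      (ObjectProperty.homMk φ)
    exact ⟨u.hom, congrArg (fun f => f.hom) hu⟩
  have Ffaith : ∀ {a b : A}, PC a → PC b → ∀ (u v : a ⟶ b),
      F.map u = F.map v → u = v := by
    intro a b ha hb u v huv
    have key2 : (restrictFunctor F PC PD fun a ha => hFD a).map (X := ⟨a, ha⟩) (Y := ⟨b, hb⟩)
        (ObjectProperty.homMk u) =
        (restrictFunctor F PC PD fun a ha => hFD a).map (ObjectProperty.homMk v) :=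
      InducedCategory.hom_ext huv
    exact congrArg (fun f => f.hom) (hFaith.map_injective key2)
  -- the counit ω is invertible on objects of 𝒞
  have ωiso : ∀ (c : A), PC c → IsIso (ω c) := by
    intro c hc
    obtain ⟨ηt, ηt_e⟩ : ∃ t : F.obj c ⟶ F.obj (G.obj (F.obj c)),
        e (F.obj c) (hFD c) (G.obj (F.obj c)) t = 𝟙 (G.obj (F.obj c)) :=
      ⟨(e (F.obj c) (hFD c) (G.obj (F.obj c))).symm (𝟙 _), Equiv.apply_symm_apply _ _⟩
    have tri : ηt ≫ F.map (ω c) = 𝟙 (F.obj c) := by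
      apply (e (F.obj c) (hFD c) c).injective
      have h1 : ηt ≫ F.map (ω c) = 𝟙 (F.obj c) ≫ ηt ≫ F.map (ω c) :=
        (Category.id_comp _).symm
      rw [h1, hnat (F.obj c) (F.obj c) (hFD c) (hFD c) (𝟙 (F.obj c))
        (G.obj (F.obj c)) c (ω c) ηt, ηt_e, G.map_id, Category.id_comp,
        Category.id_comp, ← hω c]
    have ωnat : ∀ {X X' : A} (a : X ⟶ X'), ω X ≫ a = G.map (F.map a) ≫ ω X' := by
      intro X X' a
      have h1 := hnat (F.obj X) (F.obj X) (hFD X) (hFD X) (𝟙 (F.obj X)) X X' a (𝟙 (F.obj X))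
      have h2 := hnat (F.obj X') (F.obj X) (hFD X') (hFD X) (F.map a) X' X'
        (𝟙 X') (𝟙 (F.obj X'))
      simp only [Category.id_comp, Category.comp_id, F.map_id, G.map_id, ← hω] at h1 h2
      rw [← h1, ← h2]
    have tri2 : G.map ηt ≫ ω (G.obj (F.obj c)) = 𝟙 (G.obj (F.obj c)) := by
      have h1 := hnat (F.obj (G.obj (F.obj c))) (F.obj c) (hFD (G.obj (F.obj c))) (hFD c)
        ηt (G.obj (F.obj c)) (G.obj (F.obj c)) (𝟙 _) (𝟙 _)
      simp only [Category.id_comp, Category.comp_id, F.map_id, G.map_id, ← hω] at h1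
      rw [← h1, ηt_e]
    obtain ⟨s, hs⟩ := Ffull hc (hGC _ (hFD c)) ηt
    have hs1 : s ≫ ω c = 𝟙 c := by
      apply Ffaith hc hc
      rw [F.map_comp, hs, tri, F.map_id]
    have hs2 : ω c ≫ s = 𝟙 (G.obj (F.obj c)) := by
      rw [ωnat s, hs, tri2]
    exact ⟨s, hs2, hs1⟩
  -- the purely formal part of the comodule compatibility
  have chase2 : ∀ (Xo : A'),
      ΩGs.inv.app (F'.obj Xo) ≫ G.map (ΩFs.inv.app Xo)
          ≫ G.map (F.map (Pstar.map (adjP.unit.app Xo)))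
          ≫ G.map (ΩFs.hom.app (Plow.obj (Pstar.obj Xo))
            ≫ Qstar.map (ΩFl.hom.app (Pstar.obj Xo)))
          ≫ ΩGs.hom.app (Qlow.obj (F.obj (Pstar.obj Xo)))
          ≫ Pstar.map (ΩGl.hom.app (F.obj (Pstar.obj Xo)))
        = Pstar.map (adjP.unit.app (G'.obj (F'.obj Xo)))
          ≫ Pstar.map (Plow.map (ΩGs.inv.app (F'.obj Xo)))
          ≫ Pstar.map (Plow.map (G.map (ΩFs.inv.app Xo))) := by
    intro Xo
    have g1 : ΩFs.inv.app Xo ≫ F.map (Pstar.map (adjP.unit.app Xo))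
          ≫ ΩFs.hom.app (Plow.obj (Pstar.obj Xo)) ≫ Qstar.map (ΩFl.hom.app (Pstar.obj Xo))
        = Qstar.map (adjQ.unit.app (F'.obj Xo))
          ≫ Qstar.map (Qlow.map (ΩFs.inv.app Xo)) := by
      rw [reassoc_of% (n1 (adjP.unit.app Xo)), ← Qstar.map_comp, hiiF' Xo, Qstar.map_comp]
      simp
    have g2 : G.map (ΩFs.inv.app Xo) ≫ G.map (F.map (Pstar.map (adjP.unit.app Xo)))
          ≫ G.map (ΩFs.hom.app (Plow.obj (Pstar.obj Xo)))
          ≫ G.map (Qstar.map (ΩFl.hom.app (Pstar.obj Xo)))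
        = G.map (Qstar.map (adjQ.unit.app (F'.obj Xo)))
          ≫ G.map (Qstar.map (Qlow.map (ΩFs.inv.app Xo))) := by
      simp only [← G.map_comp, Category.assoc]
      rw [g1]
    have g4 : G.map (Qstar.map (Qlow.map (ΩFs.inv.app Xo)))
          ≫ ΩGs.hom.app (Qlow.obj (F.obj (Pstar.obj Xo)))
        = ΩGs.hom.app (Qlow.obj (Qstar.obj (F'.obj Xo)))
          ≫ Pstar.map (G'.map (Qlow.map (ΩFs.inv.app Xo))) := n3 _
    have g5 : Pstar.map (G'.map (Qlow.map (ΩFs.inv.app Xo)))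
          ≫ Pstar.map (ΩGl.hom.app (F.obj (Pstar.obj Xo)))
        = Pstar.map (ΩGl.hom.app (Qstar.obj (F'.obj Xo)))
          ≫ Pstar.map (Plow.map (G.map (ΩFs.inv.app Xo))) := by
      rw [← Pstar.map_comp,
        n4 (Z := Qstar.obj (F'.obj Xo)) (W := F.obj (Pstar.obj Xo)) (ΩFs.inv.app Xo),
        Pstar.map_comp]
    have g6 : G.map (Qstar.map (adjQ.unit.app (F'.obj Xo)))
          ≫ ΩGs.hom.app (Qlow.obj (Qstar.obj (F'.obj Xo)))
        = ΩGs.hom.app (F'.obj Xo)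
          ≫ Pstar.map (G'.map (adjQ.unit.app (F'.obj Xo))) := n3 _
    have g7 : Pstar.map (G'.map (adjQ.unit.app (F'.obj Xo)))
          ≫ Pstar.map (ΩGl.hom.app (Qstar.obj (F'.obj Xo)))
        = Pstar.map (adjP.unit.app (G'.obj (F'.obj Xo)))
          ≫ Pstar.map (Plow.map (ΩGs.inv.app (F'.obj Xo))) := by
      rw [← Pstar.map_comp, hiiG' (F'.obj Xo), Pstar.map_comp]
    rw [G.map_comp]
    simp only [Category.assoc]
    rw [reassoc_of% g2, reassoc_of% g4, g5, reassoc_of% g6, reassoc_of% g7]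
    simp
  -- essential surjectivity
  haveI := hF'Full
  haveI := hF'Faith
  haveI := hG'Full
  haveI := hG'Faith
  refine { full := hF'Full, faithful := hF'Faith, essSurj := ⟨fun Y => ?_⟩ }
  have hXo : PC' (G'.obj Y.obj) := hG' _ Y.property
  haveI hbIso : IsIso (ω (Pstar.obj (G'.obj Y.obj))) := ωiso _ (hPC _ hXo)
  obtain ⟨b, hbdef⟩ : ∃ b : Pstar.obj (G'.obj (F'.obj (G'.obj Y.obj))) ⟶ Pstar.obj (G'.obj Y.obj),
      b = ΩGs.inv.app (F'.obj (G'.obj Y.obj)) ≫ G.map (ΩFs.inv.app (G'.obj Y.obj))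
        ≫ ω (Pstar.obj (G'.obj Y.obj)) := ⟨_, rfl⟩
  have hbIso' : IsIso b := by rw [hbdef]; infer_instance
  have bcomod : b ≫ Pstar.map (adjP.unit.app (G'.obj Y.obj))
      = Pstar.map (adjP.unit.app (G'.obj (F'.obj (G'.obj Y.obj))))
        ≫ Pstar.map (Plow.map b) := by
    rw [hbdef, Plow.map_comp, Plow.map_comp, Pstar.map_comp, Pstar.map_comp]
    simp only [Category.assoc]
    rw [← hstar (G'.obj Y.obj) hXo]
    simp only [Category.assoc]
    rw [reassoc_of% (chase2 (G'.obj Y.obj))]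
  obtain ⟨ζ, hζ⟩ := hsplitP (G'.obj Y.obj)
  obtain ⟨w, hwdef⟩ : ∃ w : G'.obj (F'.obj (G'.obj Y.obj)) ⟶ G'.obj Y.obj,
      w = adjP.unit.app (G'.obj (F'.obj (G'.obj Y.obj))) ≫ Plow.map b ≫ ζ := ⟨_, rfl⟩
  have hPw : Pstar.map w = b := by
    rw [hwdef, Pstar.map_comp, Pstar.map_comp, reassoc_of% bcomod.symm,
      ← Pstar.map_comp, hζ, Pstar.map_id, Category.comp_id]
  have hwIso : IsIso w :=
    split_conservative Pstar Plow adjP hsplitP w (by rw [hPw]; exact hbIso')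
  obtain ⟨v, hv⟩ := hG'Full.map_surjective
    (X := ⟨F'.obj (G'.obj Y.obj), hF' _ hXo⟩) (Y := ⟨Y.obj, Y.property⟩) (ObjectProperty.homMk w)
  haveI : IsIso ((restrictFunctor G' PD' PC' hG').map v) := by
    haveI : IsIso ((ObjectProperty.ι PC').map
        ((restrictFunctor G' PD' PC' hG').map v)) := by
      have h2 : (ObjectProperty.ι PC').map
          ((restrictFunctor G' PD' PC' hG').map v) = w := congrArg (fun k => k.hom) hv
      rw [h2]; exact hwIso
    exact isIso_of_fully_faithful (ObjectProperty.ι PC') _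
  haveI : IsIso v := isIso_of_fully_faithful (restrictFunctor G' PD' PC' hG') v
  exact ⟨⟨G'.obj Y.obj, hXo⟩, ⟨@asIso _ _ _ _ v this⟩⟩
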